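/- Let τ > 0 and let U : ℝ → ℝ be continuous with c := U(0) − U(τ) > 0. For ε > 0 define D(ε) := ∫₀^τ ∫_x^{x+τ} exp((U(y) − U(x))/ε) dy dx and F(ε) := τ·ε·(1 − exp(−c/ε)) / D(ε). Then lim_{ε→0⁺} ( −ε · log F(ε) ) = max { U(y) − U(x) : 0 ≤ x ≤ τ, x ≤ y ≤ x + τ }. (Small-noise large-deviation asymptotics, via Laplace's method, of the explicit one-dimensional steady-state flux formula for diffusion in a tilted periodic potential on the circle.) -/

import Mathlib

open MeasureTheory

open Filter Real intervalIntegral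


-- inner integral after change of variables
noncomputable def Hfun (U : ℝ → ℝ) (τ ε x : ℝ) : ℝ :=
  ∫ t in (0:ℝ)..τ, Real.exp ((U (x+t) - U x)/ε)

lemma Hfun_cont (U : ℝ → ℝ) (hU : Continuous U) (τ ε : ℝ) :
    Continuous (Hfun U τ ε) := by
  apply continuous_parametric_intervalIntegral_of_continuous' (μ := volume)
    (f := fun x t => Real.exp ((U (x+t) - U x)/ε))
  exact Real.continuous_exp.comp
    (((hU.comp (continuous_fst.add continuous_snd)).sub (hU.comp continuous_fst)).div_const ε)

lemma Hfun_nonneg (U : ℝ → ℝ) (τ ε x : ℝ) (hτ : 0 ≤ τ) : 0 ≤ Hfun U τ ε x :=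
  intervalIntegral.integral_nonneg hτ (fun t _ => (Real.exp_nonneg _))

lemma inner_eq (U : ℝ → ℝ) (τ ε x : ℝ) :
    (∫ y in x..(x + τ), Real.exp ((U y - U x) / ε)) = Hfun U τ ε x := by
  unfold Hfun
  rw [intervalIntegral.integral_comp_add_left (fun y => Real.exp ((U y - U x)/ε)) x, add_zero]

lemma K_compact (τ : ℝ) (hτ : 0 < τ) :
    IsCompact {p : ℝ × ℝ | 0 ≤ p.1 ∧ p.1 ≤ τ ∧ p.1 ≤ p.2 ∧ p.2 ≤ p.1 + τ} := by
  apply IsCompact.of_isClosed_subset (isCompact_Icc (a := ((0:ℝ),(0:ℝ))) (b := (τ, τ + τ)))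
  · have : {p : ℝ × ℝ | 0 ≤ p.1 ∧ p.1 ≤ τ ∧ p.1 ≤ p.2 ∧ p.2 ≤ p.1 + τ}
        = {p : ℝ × ℝ | 0 ≤ p.1} ∩ ({p | p.1 ≤ τ} ∩ ({p | p.1 ≤ p.2} ∩ {p | p.2 ≤ p.1 + τ})) := by
      ext p; simp [Set.mem_setOf_eq, Set.mem_inter_iff]
    rw [this]
    exact (isClosed_le continuous_const continuous_fst).inter
      ((isClosed_le continuous_fst continuous_const).inter
        ((isClosed_le continuous_fst continuous_snd).inter
          (isClosed_le continuous_snd (continuous_fst.add continuous_const))))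
  · rintro ⟨x, y⟩ ⟨h1, h2, h3, h4⟩
    constructor
    · exact ⟨h1, h1.trans h3⟩
    · exact ⟨h2, by dsimp at *; linarith⟩

lemma laplace (τ : ℝ) (hτ : 0 < τ) (U : ℝ → ℝ) (hU : Continuous U) :
    Tendsto (fun ε : ℝ => ε * Real.log (∫ x in (0:ℝ)..τ, Hfun U τ ε x))
      (nhdsWithin 0 (Set.Ioi 0))
      (nhds (sSup ((fun p : ℝ × ℝ => U p.2 - U p.1) ''
        {p : ℝ × ℝ | 0 ≤ p.1 ∧ p.1 ≤ τ ∧ p.1 ≤ p.2 ∧ p.2 ≤ p.1 + τ}))) := by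
  set K : Set (ℝ × ℝ) := {p : ℝ × ℝ | 0 ≤ p.1 ∧ p.1 ≤ τ ∧ p.1 ≤ p.2 ∧ p.2 ≤ p.1 + τ} with hKdef
  set g : ℝ × ℝ → ℝ := fun p => U p.2 - U p.1 with hgdef
  have hgc : Continuous g := (hU.comp continuous_snd).sub (hU.comp continuous_fst)
  have hKne : K.Nonempty := ⟨(0, 0), by simp [hKdef, hτ.le]⟩
  obtain ⟨p₀, hp₀, hMeq, hle⟩ :=
    (K_compact τ hτ).exists_sSup_image_eq_and_ge hKne hgc.continuousOn
  set M : ℝ := sSup (g '' K) with hMdef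
  -- continuity of the integrand in (x,t)
  have hexpc : ∀ ε : ℝ, ∀ x : ℝ,
      Continuous fun t => Real.exp ((U (x + t) - U x) / ε) := fun ε x =>
    Real.continuous_exp.comp (((hU.comp (continuous_const.add continuous_id)).sub
      continuous_const).div_const ε)
  -- upper bound on phi
  have hφle : ∀ x ∈ Set.Icc (0:ℝ) τ, ∀ t ∈ Set.Icc (0:ℝ) τ, U (x + t) - U x ≤ M := by
    intro x hx t ht
    have hmem : ((x, x + t) : ℝ × ℝ) ∈ K :=
      ⟨hx.1, hx.2, le_add_of_nonneg_right ht.1, show x + t ≤ x + τ by linarith [ht.2]⟩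
    have := hle (x, x + t) hmem
    rw [hMeq]
    exact this
  -- upper bound on H
  have hHle : ∀ ε : ℝ, 0 < ε → ∀ x ∈ Set.Icc (0:ℝ) τ,
      Hfun U τ ε x ≤ τ * Real.exp (M / ε) := by
    intro ε hε x hx
    have hint : IntervalIntegrable (fun t => Real.exp ((U (x + t) - U x) / ε)) volume 0 τ :=
      (hexpc ε x).intervalIntegrable 0 τ
    calc Hfun U τ ε x ≤ ∫ _ in (0:ℝ)..τ, Real.exp (M / ε) := by
          apply intervalIntegral.integral_mono_on hτ.le hint intervalIntegrable_const
          intro t ht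
          exact Real.exp_le_exp.2 ((div_le_div_iff_of_pos_right hε).2 (hφle x hx t ht))
      _ = τ * Real.exp (M / ε) := by simp
  -- upper bound on D
  have hDle : ∀ ε : ℝ, 0 < ε →
      (∫ x in (0:ℝ)..τ, Hfun U τ ε x) ≤ τ * (τ * Real.exp (M / ε)) := by
    intro ε hε
    calc (∫ x in (0:ℝ)..τ, Hfun U τ ε x) ≤ ∫ _ in (0:ℝ)..τ, τ * Real.exp (M / ε) :=
          intervalIntegral.integral_mono_on hτ.le
            ((Hfun_cont U hU τ ε).intervalIntegrable 0 τ) intervalIntegrable_const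
            (hHle ε hε)
      _ = τ * (τ * Real.exp (M / ε)) := by simp [mul_comm]
  -- lower bound
  have hlow : ∀ δ : ℝ, 0 < δ → ∃ b : ℝ, 0 < b ∧ ∀ ε : ℝ, 0 < ε →
      b * Real.exp ((M - δ) / ε) ≤ ∫ x in (0:ℝ)..τ, Hfun U τ ε x := by
    intro δ hδ
    set x₀ := p₀.1 with hx₀def
    set t₀ := p₀.2 - p₀.1 with ht₀def
    have hx₀ : x₀ ∈ Set.Icc (0:ℝ) τ := ⟨hp₀.1, hp₀.2.1⟩
    have ht₀ : t₀ ∈ Set.Icc (0:ℝ) τ :=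
      ⟨sub_nonneg.2 hp₀.2.2.1, by have := hp₀.2.2.2; rw [ht₀def]; linarith⟩
    set φ : ℝ × ℝ → ℝ := fun q => U (q.1 + q.2) - U q.1 with hφdef
    have hφc : Continuous φ :=
      (hU.comp (continuous_fst.add continuous_snd)).sub (hU.comp continuous_fst)
    have hφ₀ : φ (x₀, t₀) = M := by
      have hxy : x₀ + t₀ = p₀.2 := by show p₀.1 + (p₀.2 - p₀.1) = p₀.2; ring
      rw [hMeq]
      simp only [hφdef, hxy]; rfl
    obtain ⟨η, hη, hball⟩ := Metric.continuousAt_iff.1 hφc.continuousAt δ hδ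
    set h : ℝ := min (η / 2) τ with hhdef
    have hh : 0 < h := lt_min (by linarith) hτ
    have hhτ : h ≤ τ := min_le_right _ _
    have hhη : h < η := lt_of_le_of_lt (min_le_left _ _) (by linarith)
    have hrect : ∀ s₀ ∈ Set.Icc (0:ℝ) τ, ∃ s₁ : ℝ, 0 ≤ s₁ ∧ s₁ + h ≤ τ ∧
        ∀ s ∈ Set.Icc s₁ (s₁ + h), |s - s₀| ≤ h := by
      intro s₀ hs₀
      refine ⟨min s₀ (τ - h), le_min hs₀.1 (by linarith), ?_, ?_⟩
      · have := min_le_right s₀ (τ - h); linarith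
      · intro s hs
        have h1 : s₀ - h ≤ min s₀ (τ - h) := le_min (by linarith) (by linarith [hs₀.2])
        have h2 : min s₀ (τ - h) ≤ s₀ := min_le_left _ _
        rw [abs_le]
        exact ⟨by linarith [hs.1], by linarith [hs.2]⟩
    obtain ⟨x₁, hx₁0, hx₁τ, hx₁near⟩ := hrect x₀ hx₀
    obtain ⟨t₁, ht₁0, ht₁τ, ht₁near⟩ := hrect t₀ ht₀
    have hφlow : ∀ x ∈ Set.Icc x₁ (x₁ + h), ∀ t ∈ Set.Icc t₁ (t₁ + h),
        M - δ ≤ U (x + t) - U x := by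
      intro x hx t ht
      have hd : dist ((x, t) : ℝ × ℝ) (x₀, t₀) < η := by
        rw [Prod.dist_eq]
        exact max_lt (lt_of_le_of_lt (by simpa [Real.dist_eq] using hx₁near x hx) hhη)
          (lt_of_le_of_lt (by simpa [Real.dist_eq] using ht₁near t ht) hhη)
      have hb := hball hd
      rw [hφ₀, Real.dist_eq, abs_lt] at hb
      have h5 : M - δ < φ (x, t) := by linarith [hb.1]
      rw [hφdef] at h5
      exact h5.le
    refine ⟨h * h, mul_pos hh hh, ?_⟩
    intro ε hε
    have hconst : ∀ x ∈ Set.Icc x₁ (x₁ + h),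
        h * Real.exp ((M - δ) / ε) ≤ Hfun U τ ε x := by
      intro x hx
      have hint : IntervalIntegrable (fun t => Real.exp ((U (x + t) - U x) / ε)) volume 0 τ :=
        (hexpc ε x).intervalIntegrable 0 τ
      calc h * Real.exp ((M - δ) / ε)
          = ∫ _ in t₁..(t₁ + h), Real.exp ((M - δ) / ε) := by
            rw [intervalIntegral.integral_const, smul_eq_mul, add_sub_cancel_left]
        _ ≤ ∫ t in t₁..(t₁ + h), Real.exp ((U (x + t) - U x) / ε) := by
            apply intervalIntegral.integral_mono_on (by linarith) intervalIntegrable_const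
              ((hexpc ε x).intervalIntegrable t₁ (t₁ + h))
            intro t ht
            exact Real.exp_le_exp.2 ((div_le_div_iff_of_pos_right hε).2 (hφlow x hx t ht))
        _ ≤ Hfun U τ ε x :=
            intervalIntegral.integral_mono_interval ht₁0 (by linarith) ht₁τ
              (Filter.Eventually.of_forall fun t => (Real.exp_nonneg _)) hint
    calc h * h * Real.exp ((M - δ) / ε)
        = ∫ _ in x₁..(x₁ + h), h * Real.exp ((M - δ) / ε) := by
          rw [intervalIntegral.integral_const, smul_eq_mul, add_sub_cancel_left]; ring
      _ ≤ ∫ x in x₁..(x₁ + h), Hfun U τ ε x :=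
          intervalIntegral.integral_mono_on (by linarith) intervalIntegrable_const
            ((Hfun_cont U hU τ ε).intervalIntegrable x₁ (x₁ + h)) hconst
      _ ≤ ∫ x in (0:ℝ)..τ, Hfun U τ ε x :=
          intervalIntegral.integral_mono_interval hx₁0 (by linarith) hx₁τ
            (Filter.Eventually.of_forall fun x => Hfun_nonneg U τ ε x hτ.le)
            ((Hfun_cont U hU τ ε).intervalIntegrable 0 τ)
  -- positivity of D
  have hDpos : ∀ ε : ℝ, 0 < ε → 0 < ∫ x in (0:ℝ)..τ, Hfun U τ ε x := by
    intro ε hε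
    obtain ⟨b, hb, hbd⟩ := hlow 1 one_pos
    exact lt_of_lt_of_le (mul_pos hb (Real.exp_pos _)) (hbd ε hε)
  -- conclusion via order tendsto
  clear_value M
  apply tendsto_order.2
  constructor
  · intro a ha
    set δ : ℝ := (M - a) / 2 with hδdef
    have hδ : 0 < δ := by rw [hδdef]; linarith
    obtain ⟨b, hb, hbd⟩ := hlow δ hδ
    have h0 : Tendsto (fun ε : ℝ => ε * Real.log b) (nhdsWithin 0 (Set.Ioi 0)) (nhds 0) := by
      simpa [Pi.mul_def] using (((continuous_id (X := ℝ)).mul continuous_const).tendsto 0).mono_left (nhdsWithin_le_nhds (s := Set.Ioi (0:ℝ)))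
    have hev := h0.eventually (eventually_gt_nhds (show a - M + δ < 0 by rw [hδdef]; linarith))
    filter_upwards [hev, self_mem_nhdsWithin] with ε h1 h2
    have hε : (0:ℝ) < ε := h2
    have hlb := hbd ε hε
    have hlog : Real.log b + (M - δ) / ε ≤ Real.log (∫ x in (0:ℝ)..τ, Hfun U τ ε x) := by
      have := Real.log_le_log (mul_pos hb (Real.exp_pos _)) hlb
      rwa [Real.log_mul hb.ne' (Real.exp_ne_zero _), Real.log_exp] at this
    have h3 := mul_le_mul_of_nonneg_left hlog hε.le
    have h4 : ε * ((M - δ) / ε) = M - δ := by field_simp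
    calc a = (a - M + δ) + (M - δ) := by ring
      _ < ε * Real.log b + (M - δ) := by linarith
      _ = ε * (Real.log b + (M - δ) / ε) := by rw [mul_add, h4]
      _ ≤ ε * Real.log (∫ x in (0:ℝ)..τ, Hfun U τ ε x) := h3
  · intro a ha
    have h0 : Tendsto (fun ε : ℝ => ε * (2 * Real.log τ)) (nhdsWithin 0 (Set.Ioi 0)) (nhds 0) := by
      simpa [Pi.mul_def] using (((continuous_id (X := ℝ)).mul continuous_const).tendsto 0).mono_left (nhdsWithin_le_nhds (s := Set.Ioi (0:ℝ)))
    have hev := h0.eventually (eventually_lt_nhds (show (0:ℝ) < a - M by linarith))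
    filter_upwards [hev, self_mem_nhdsWithin] with ε h1 h2
    have hε : (0:ℝ) < ε := h2
    have hub := hDle ε hε
    have hlog : Real.log (∫ x in (0:ℝ)..τ, Hfun U τ ε x)
        ≤ Real.log τ + (Real.log τ + M / ε) := by
      have := Real.log_le_log (hDpos ε hε) hub
      rwa [Real.log_mul hτ.ne' (mul_pos hτ (Real.exp_pos _)).ne',
        Real.log_mul hτ.ne' (Real.exp_ne_zero _), Real.log_exp] at this
    have h3 := mul_le_mul_of_nonneg_left hlog hε.le
    have h4 : ε * (M / ε) = M := by field_simp
    calc ε * Real.log (∫ x in (0:ℝ)..τ, Hfun U τ ε x)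
        ≤ ε * (Real.log τ + (Real.log τ + M / ε)) := h3
      _ = ε * (2 * Real.log τ) + M := by rw [mul_add, mul_add, h4]; ring
      _ < a := by linarith

lemma Hfun_pos (U : ℝ → ℝ) (hU : Continuous U) (τ ε x : ℝ) (hτ : 0 < τ) :
    0 < Hfun U τ ε x :=
  intervalIntegral.intervalIntegral_pos_of_pos
    ((Real.continuous_exp.comp (((hU.comp (continuous_const.add continuous_id)).sub
      continuous_const).div_const ε)).intervalIntegrable 0 τ)
    (fun _ => Real.exp_pos _) hτ

lemma Dpos (U : ℝ → ℝ) (hU : Continuous U) (τ ε : ℝ) (hτ : 0 < τ) :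
    0 < ∫ x in (0:ℝ)..τ, Hfun U τ ε x :=
  intervalIntegral.intervalIntegral_pos_of_pos
    ((Hfun_cont U hU τ ε).intervalIntegrable 0 τ)
    (fun x => Hfun_pos U hU τ ε x hτ) hτ

/-- Small-noise large-deviation asymptotics (Laplace's method) of the
explicit one-dimensional steady-state flux formula for diffusion in a tilted periodic
potential: `−ε·log F(ε) → max { U(y) − U(x) : 0 ≤ x ≤ τ, x ≤ y ≤ x + τ }` as `ε → 0⁺`,
where `F(ε) = τ·ε·(1 − e^{−c/ε}) / ∫₀^τ ∫_x^{x+τ} e^{(U(y)−U(x))/ε} dy dx` and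
`c = U(0) − U(τ) > 0`. -/
theorem one_dimensional_flux_asymptotics (τ : ℝ) (hτ : 0 < τ)
    (U : ℝ → ℝ) (hU : Continuous U) (hc : 0 < U 0 - U τ) :
    Filter.Tendsto
      (fun ε : ℝ =>
        -ε * Real.log (τ * ε * (1 - Real.exp (-(U 0 - U τ) / ε)) /
          ∫ x in (0 : ℝ)..τ, ∫ y in x..(x + τ), Real.exp ((U y - U x) / ε)))
      (nhdsWithin 0 (Set.Ioi 0))
      (nhds (sSup ((fun p : ℝ × ℝ => U p.2 - U p.1) ''
        {p : ℝ × ℝ | 0 ≤ p.1 ∧ p.1 ≤ τ ∧ p.1 ≤ p.2 ∧ p.2 ≤ p.1 + τ}))) := by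
  have hDeq : ∀ ε : ℝ, (∫ x in (0:ℝ)..τ, ∫ y in x..(x + τ), Real.exp ((U y - U x) / ε))
      = ∫ x in (0:ℝ)..τ, Hfun U τ ε x := fun ε =>
    intervalIntegral.integral_congr (fun x _ => inner_eq U τ ε x)
  -- tendsto pieces
  have h1 := laplace τ hτ U hU
  have h2 : Tendsto (fun ε : ℝ => ε * Real.log τ) (nhdsWithin 0 (Set.Ioi 0)) (nhds 0) := by
    simpa [Pi.mul_def] using (((continuous_id (X := ℝ)).mul continuous_const).tendsto 0).mono_left
      (nhdsWithin_le_nhds (s := Set.Ioi (0:ℝ)))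
  have h3 : Tendsto (fun ε : ℝ => ε * Real.log ε) (nhdsWithin 0 (Set.Ioi 0)) (nhds 0) := by
    simpa using (Real.continuous_mul_log.tendsto 0).mono_left
      (nhdsWithin_le_nhds (s := Set.Ioi (0:ℝ)))
  have hid : Tendsto (fun ε : ℝ => ε) (nhdsWithin 0 (Set.Ioi 0)) (nhds 0) :=
    tendsto_id.mono_left nhdsWithin_le_nhds
  have ha : Tendsto (fun ε : ℝ => -(U 0 - U τ) / ε) (nhdsWithin 0 (Set.Ioi 0)) atBot := by
    have hT : Tendsto (fun ε : ℝ => (U 0 - U τ) * ε⁻¹) (nhdsWithin 0 (Set.Ioi 0)) atTop :=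
      tendsto_inv_nhdsGT_zero.const_mul_atTop hc
    have := tendsto_neg_atTop_atBot.comp hT
    refine this.congr fun ε => ?_
    simp only [Function.comp]; rw [neg_div, div_eq_mul_inv]
  have hb : Tendsto (fun ε : ℝ => Real.exp (-(U 0 - U τ) / ε)) (nhdsWithin 0 (Set.Ioi 0))
      (nhds 0) := Real.tendsto_exp_atBot.comp ha
  have hc1 : Tendsto (fun ε : ℝ => 1 - Real.exp (-(U 0 - U τ) / ε)) (nhdsWithin 0 (Set.Ioi 0))
      (nhds 1) := by simpa using tendsto_const_nhds.sub hb
  have hl : Tendsto (fun ε : ℝ => Real.log (1 - Real.exp (-(U 0 - U τ) / ε)))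
      (nhdsWithin 0 (Set.Ioi 0)) (nhds 0) := by
    have := ((Real.continuousAt_log one_ne_zero).tendsto).comp hc1
    simpa [Real.log_one, Function.comp_def] using this
  have h4 : Tendsto (fun ε : ℝ => ε * Real.log (1 - Real.exp (-(U 0 - U τ) / ε)))
      (nhdsWithin 0 (Set.Ioi 0)) (nhds 0) := by simpa using hid.mul hl
  have hcomb := ((h1.sub h2).sub h3).sub h4
  rw [sub_zero, sub_zero, sub_zero] at hcomb
  refine Filter.Tendsto.congr' ?_ hcomb
  filter_upwards [self_mem_nhdsWithin] with ε hε
  have hε : (0:ℝ) < ε := hε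
  have hD := Dpos U hU τ ε hτ
  have h1e : 0 < 1 - Real.exp (-(U 0 - U τ) / ε) := by
    have hneg : -(U 0 - U τ) / ε < 0 := div_neg_of_neg_of_pos (neg_lt_zero.2 hc) hε
    have := Real.exp_lt_one_iff.2 hneg
    linarith
  rw [hDeq ε, Real.log_div (by positivity) hD.ne',
    Real.log_mul (mul_pos hτ hε).ne' h1e.ne', Real.log_mul hτ.ne' hε.ne']
  ring
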